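/- Energy identity for one step of the first-order IEQ-DG scheme (identity (3.11) in the proof of Theorem 3.1): let Δt > 0, let T : H → H be a self-adjoint bounded linear operator, let u⁰, u¹, q⁰, q¹ ∈ V and U⁰ ∈ H, and set U¹ := U⁰ + (1/2) T (u¹ − u⁰). Suppose that for all φ, ψ ∈ V: ⟨(u¹ − u⁰)/Δt, φ⟩ + b(u¹, φ) = −A(φ, q¹) − ⟨T U¹, φ⟩, ⟨q⁰, ψ⟩ = A(u⁰, ψ) and ⟨q¹, ψ⟩ = A(u¹, ψ). Then E(u¹, q¹, U¹) = E(u⁰, q⁰, U⁰) − (1/Δt)‖u¹ − u⁰‖² − (1/2)‖q¹ − q⁰‖² − ‖U¹ − U⁰‖² − (1/2) b(u¹ − u⁰, u¹ − u⁰). -/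

import Mathlib

/-- Energy identity for one step of the first-order IEQ-DG scheme
(identity (3.11) in the proof of Theorem 3.1). -/
theorem stmt_4
    {H : Type*} [NormedAddCommGroup H] [InnerProductSpace ℝ H] [CompleteSpace H]
    (V : Submodule ℝ H) [FiniteDimensional ℝ V]
    (A : V →ₗ[ℝ] V →ₗ[ℝ] ℝ)
    (b : V →ₗ[ℝ] V →ₗ[ℝ] ℝ)
    (hb_symm : ∀ x y : V, b x y = b y x)
    (hb_pos : ∀ x : V, 0 ≤ b x x)
    (E : V → V → H → ℝ)
    (hE : ∀ (u q : V) (U : H), E u q U = (1/2) * ‖(q : H)‖^2 + ‖U‖^2 + (1/2) * b u u)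
    (Δt : ℝ) (hΔt : 0 < Δt)
    (T : H →L[ℝ] H)
    (hT : ∀ x y : H, (inner ℝ (T x) y : ℝ) = (inner ℝ x (T y) : ℝ))
    (u₀ u₁ q₀ q₁ : V) (U₀ U₁ : H)
    (hU₁ : U₁ = U₀ + (1/2 : ℝ) • T ((u₁ : H) - (u₀ : H)))
    (heq1 : ∀ φ : V,
      (inner ℝ ((1/Δt) • ((u₁ : H) - (u₀ : H))) (φ : H) : ℝ) + b u₁ φ
        = -A φ q₁ - (inner ℝ (T U₁) (φ : H) : ℝ))
    (heq2 : ∀ ψ : V, (inner ℝ (q₀ : H) (ψ : H) : ℝ) = A u₀ ψ)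
    (heq3 : ∀ ψ : V, (inner ℝ (q₁ : H) (ψ : H) : ℝ) = A u₁ ψ) :
    E u₁ q₁ U₁ = E u₀ q₀ U₀ - (1/Δt) * ‖(u₁ : H) - (u₀ : H)‖^2
      - (1/2) * ‖(q₁ : H) - (q₀ : H)‖^2 - ‖U₁ - U₀‖^2
      - (1/2) * b (u₁ - u₀) (u₁ - u₀) := by
  set δ : H := (u₁ : H) - (u₀ : H) with hδdef
  have hδcoe : ((u₁ - u₀ : V) : H) = δ := by simp [hδdef]
  -- A(u₁-u₀, q₁) = ⟨q₁-q₀, q₁⟩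
  have hA : A (u₁ - u₀) q₁ = (inner ℝ ((q₁ : H) - (q₀ : H)) (q₁ : H) : ℝ) := by
    rw [map_sub, LinearMap.sub_apply, ← heq3 q₁, ← heq2 q₁, inner_sub_left]
  -- T δ = 2 • (U₁ - U₀)
  have hTδ : T δ = (2 : ℝ) • (U₁ - U₀) := by
    rw [hU₁]; simp [smul_smul]
  have hTU : (inner ℝ (T U₁) δ : ℝ) = 2 * (inner ℝ U₁ (U₁ - U₀) : ℝ) := by
    rw [hT, hTδ, real_inner_smul_right]
  have h1 := heq1 (u₁ - u₀)
  rw [hδcoe] at h1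
  have hbs : b u₁ (u₁ - u₀)
      = (1/2) * b u₁ u₁ - (1/2) * b u₀ u₀ + (1/2) * b (u₁ - u₀) (u₁ - u₀) := by
    have h2 := hb_symm u₁ u₀
    simp only [map_sub, LinearMap.sub_apply] at *
    linarith
  have hinδ : (inner ℝ ((1/Δt) • δ) δ : ℝ) = (1/Δt) * ‖δ‖^2 := by
    rw [real_inner_smul_left, real_inner_self_eq_norm_sq]
  -- expand inner products of differences into norms
  have hq : (inner ℝ ((q₁ : H) - (q₀ : H)) (q₁ : H) : ℝ)
      = (1/2) * ‖(q₁ : H)‖^2 - (1/2) * ‖(q₀ : H)‖^2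
        + (1/2) * ‖(q₁ : H) - (q₀ : H)‖^2 := by
    have h := @norm_sub_sq_real H _ _ (q₁ : H) (q₀ : H)
    have h2 : (inner ℝ ((q₁ : H) - (q₀ : H)) (q₁ : H) : ℝ)
        = ‖(q₁ : H)‖^2 - inner ℝ (q₀ : H) (q₁ : H) := by
      rw [inner_sub_left, real_inner_self_eq_norm_sq]
    rw [real_inner_comm] at h
    linarith
  have hU : (inner ℝ U₁ (U₁ - U₀) : ℝ)
      = (1/2) * ‖U₁‖^2 - (1/2) * ‖U₀‖^2 + (1/2) * ‖U₁ - U₀‖^2 := by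
    have h := @norm_sub_sq_real H _ _ U₁ U₀
    have h2 : (inner ℝ U₁ (U₁ - U₀) : ℝ) = ‖U₁‖^2 - inner ℝ U₁ U₀ := by
      rw [inner_sub_right, real_inner_self_eq_norm_sq]
    linarith
  rw [hA, hTU, hinδ, hbs, hq, hU] at h1
  rw [hE, hE]
  linarith
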